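/- Let V be a finite-dimensional ℂ(q)-vector space equipped with a K-valued Hermitian inner product (·,·) (i.e., sesquilinear with respect to the conjugation on ℂ(q) fixing q, Hermitian symmetric, with lc((v,v)) ≥ 0, lc((v,v)) = 0 only for v = 0, and deg((v,v)) always even or −∞). Then V possesses an orthogonal basis all of whose vectors v satisfy lt(v) = 1, where lt(v) := lc((v,v))^{1/2} q^{deg((v,v))/2}. -/

import Mathlib

open Polynomial

noncomputable section

/-- `K = ℂ(q)`, with `RatFunc.X` playing the role of `q`. -/
abbrev Kq : Type := RatFunc ℂ

/-- The conjugation on `ℂ(q)` extending complex conjugation with `q* = q`. -/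
noncomputable def qconj : Kq →+* Kq :=
  RatFunc.mapRingHom (Polynomial.mapRingHom (starRingEnd ℂ))
    (by
      intro p hp
      simp only [Submonoid.mem_comap, mem_nonZeroDivisors_iff_ne_zero] at *
      simpa using hp)

/-- The leading coefficient `lc(c)` of a rational function. -/
noncomputable def lcoef (c : Kq) : ℂ := c.num.leadingCoeff / c.denom.leadingCoeff

lemma lcoef_eq_zero_iff {f : Kq} : lcoef f = 0 ↔ f = 0 := by
  rw [lcoef, _root_.div_eq_zero_iff]
  simp [Polynomial.leadingCoeff_eq_zero, RatFunc.denom_ne_zero, RatFunc.num_eq_zero_iff]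

lemma lcoef_mul (x y : Kq) : lcoef (x * y) = lcoef x * lcoef y := by
  have h := congrArg Polynomial.leadingCoeff (RatFunc.num_denom_mul x y)
  simp only [Polynomial.leadingCoeff_mul] at h
  have h1 : (x.denom).leadingCoeff ≠ 0 := by
    simp [Polynomial.leadingCoeff_eq_zero, RatFunc.denom_ne_zero]
  have h2 : (y.denom).leadingCoeff ≠ 0 := by
    simp [Polynomial.leadingCoeff_eq_zero, RatFunc.denom_ne_zero]
  have h3 : ((x*y).denom).leadingCoeff ≠ 0 := by
    simp [Polynomial.leadingCoeff_eq_zero, RatFunc.denom_ne_zero]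
  rw [lcoef, lcoef, lcoef]
  field_simp
  linear_combination h

lemma lcoef_one : lcoef 1 = 1 := by simp [lcoef]

def lcoefHom : Kq →*₀ ℂ where
  toFun := lcoef
  map_zero' := by simp [lcoef]
  map_one' := lcoef_one
  map_mul' := lcoef_mul

lemma lcoef_zpow (x : Kq) (n : ℤ) : lcoef (x ^ n) = lcoef x ^ n := map_zpow₀ lcoefHom x n

lemma lcoef_X : lcoef (RatFunc.X : Kq) = 1 := by simp [lcoef]

lemma lcoef_C (a : ℂ) : lcoef (RatFunc.C a) = a := by simp [lcoef]

lemma intDegree_inv {x : Kq} (hx : x ≠ 0) : (x⁻¹).intDegree = -x.intDegree := by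
  have h := RatFunc.intDegree_mul hx (inv_ne_zero hx)
  rw [mul_inv_cancel₀ hx, RatFunc.intDegree_one] at h
  omega

lemma intDegree_zpow_X (n : ℤ) : ((RatFunc.X : Kq) ^ n).intDegree = n := by
  have hX : (RatFunc.X : Kq) ≠ 0 := RatFunc.X_ne_zero
  have hn : ∀ m : ℕ, ((RatFunc.X : Kq) ^ m).intDegree = m := by
    intro m
    induction m with
    | zero => simp [RatFunc.intDegree_one]
    | succ k ih =>
      rw [pow_succ, RatFunc.intDegree_mul (pow_ne_zero _ hX) hX, ih, RatFunc.intDegree_X]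
      push_cast; ring
  rcases n with m | m
  · simpa using hn m
  · rw [zpow_negSucc, intDegree_inv (pow_ne_zero _ hX), hn]; simp [Int.negSucc_eq]

lemma qconj_algebraMap (p : Polynomial ℂ) :
    qconj (algebraMap (Polynomial ℂ) Kq p) = algebraMap (Polynomial ℂ) Kq (p.map (starRingEnd ℂ)) := by
  rw [qconj, RatFunc.coe_mapRingHom_eq_coe_map, RatFunc.map_apply]
  simp [RatFunc.num_algebraMap, RatFunc.denom_algebraMap]

lemma qconj_X : qconj (RatFunc.X : Kq) = RatFunc.X := by
  have : (RatFunc.X : Kq) = algebraMap (Polynomial ℂ) Kq Polynomial.X := rfl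
  rw [this, qconj_algebraMap]
  simp

lemma qconj_C (a : ℂ) : qconj (RatFunc.C a) = RatFunc.C ((starRingEnd ℂ) a) := by
  have : (RatFunc.C a : Kq) = algebraMap (Polynomial ℂ) Kq (Polynomial.C a) := rfl
  rw [this, qconj_algebraMap, Polynomial.map_C]
  rfl

lemma normalize_scalar {f : Kq} (hf : f ≠ 0) (him : (lcoef f).im = 0)
    (hre : 0 ≤ (lcoef f).re) (hev : Even f.intDegree) :
    ∃ c : Kq, c ≠ 0 ∧ qconj c = c ∧ lcoef (c * c * f) = 1 ∧ (c * c * f).intDegree = 0 := by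
  obtain ⟨m, hm⟩ := hev
  set r : ℂ := lcoef f with hr
  have hr0 : r ≠ 0 := fun h => hf (lcoef_eq_zero_iff.mp h)
  have hrre : 0 < r.re := by
    rcases lt_or_eq_of_le hre with h | h
    · exact h
    · exact absurd (Complex.ext h.symm him) hr0
  set a : ℂ := ((Real.sqrt r.re : ℂ))⁻¹ with ha
  have hs0 : Real.sqrt r.re ≠ 0 := by positivity
  have ha0 : a ≠ 0 := by
    simp [ha, hs0]
  have haa : a * a = (r.re : ℂ)⁻¹ := by
    rw [ha, ← mul_inv]
    norm_cast
    rw [Real.mul_self_sqrt hrre.le]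
  refine ⟨RatFunc.C a * RatFunc.X ^ (-m), ?_, ?_, ?_, ?_⟩
  · apply mul_ne_zero
    · simpa using (map_ne_zero (RatFunc.C (K := ℂ))).mpr ha0
    · exact zpow_ne_zero _ RatFunc.X_ne_zero
  · rw [map_mul, map_zpow₀, qconj_X, qconj_C]
    congr 2
    rw [Complex.conj_eq_iff_im]
    simp [ha]
  · rw [lcoef_mul, lcoef_mul, lcoef_mul, lcoef_C, lcoef_zpow, lcoef_X, one_zpow, mul_one]
    rw [haa, ← hr]
    have : r = (r.re : ℂ) := Complex.ext rfl (by simp [him])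
    rw [this]
    norm_cast
    field_simp
  · have hCa : (RatFunc.C a : Kq) ≠ 0 := (map_ne_zero (RatFunc.C (K := ℂ))).mpr ha0
    have hXm : (RatFunc.X : Kq) ^ (-m) ≠ 0 := zpow_ne_zero _ RatFunc.X_ne_zero
    have hc : (RatFunc.C a * RatFunc.X ^ (-m) : Kq) ≠ 0 := mul_ne_zero hCa hXm
    rw [RatFunc.intDegree_mul (mul_ne_zero hc hc) hf,
        RatFunc.intDegree_mul hc hc,
        RatFunc.intDegree_mul hCa hXm, RatFunc.intDegree_C, intDegree_zpow_X]
    omega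

set_option maxHeartbeats 1000000 in
set_option synthInstance.maxHeartbeats 400000 in
lemma main_aux (n : ℕ) :
    ∀ (V : Type) [AddCommGroup V] [Module Kq V] [FiniteDimensional Kq V]
    (B : V → V → Kq)
    (_ : ∀ (a b : Kq) (u v w : V), B (a • u + b • v) w = a * B u w + b * B v w)
    (_ : ∀ u v : V, B v u = qconj (B u v))
    (_ : ∀ v : V, (lcoef (B v v)).im = 0 ∧ 0 ≤ (lcoef (B v v)).re)
    (_ : ∀ v : V, lcoef (B v v) = 0 → v = 0)
    (_ : ∀ v : V, B v v ≠ 0 → Even (B v v).intDegree)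
    (_ : Module.finrank Kq V = n),
    ∃ b : Module.Basis (Fin n) Kq V,
      (∀ i j : Fin n, i ≠ j → B (b i) (b j) = 0) ∧
      (∀ i : Fin n, lcoef (B (b i) (b i)) = 1 ∧ (B (b i) (b i)).intDegree = 0) := by
  induction n with
  | zero =>
    intro V _ _ _ B hlin hsymm hpos hdef heven hrank
    have : Subsingleton V := Module.finrank_zero_iff.mp hrank
    exact ⟨Module.Basis.empty V, fun i => i.elim0, fun i => i.elim0⟩
  | succ n ih =>
    intro V _ _ _ B hlin hsymm hpos hdef heven hrank
    -- derived linearity facts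
    have hadd : ∀ u v w : V, B (u + v) w = B u w + B v w := by
      intro u v w
      have := hlin 1 1 u v w
      simpa using this
    have hsmul : ∀ (a : Kq) (u w : V), B (a • u) w = a * B u w := by
      intro a u w
      have := hlin a 0 u u w
      simpa using this
    have hB0 : ∀ w : V, B 0 w = 0 := by
      intro w
      have := hlin 0 0 0 0 w
      simpa using this
    have hsmul' : ∀ (a : Kq) (u v : V), B u (a • v) = qconj a * B u v := by
      intro a u v
      rw [hsymm (a • v) u, hsmul, map_mul, ← hsymm]
    have hanis : ∀ v : V, B v v = 0 → v = 0 := by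
      intro v hv
      exact hdef v (by rw [hv]; exact lcoef_eq_zero_iff.mpr rfl)
    -- pick a nonzero vector
    have : Nontrivial V := Module.nontrivial_of_finrank_pos (R := Kq) (by omega)
    obtain ⟨v0, hv0⟩ := exists_ne (0 : V)
    have hBv0 : B v0 v0 ≠ 0 := fun h => hv0 (hanis v0 h)
    obtain ⟨c, hc0, hcconj, hclc, hcdeg⟩ :=
      normalize_scalar hBv0 (hpos v0).1 (hpos v0).2 (heven v0 hBv0)
    set v : V := c • v0 with hvdef
    have hBvv : B v v = c * c * B v0 v0 := by
      rw [hvdef, hsmul, hsmul', hcconj]; ring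
    have hBvv1 : lcoef (B v v) = 1 := by rw [hBvv]; exact hclc
    have hBvvdeg : (B v v).intDegree = 0 := by rw [hBvv]; exact hcdeg
    have hBvvne : B v v ≠ 0 := by
      intro h
      rw [h] at hBvv1
      simp [lcoef] at hBvv1
    -- the orthogonal complement
    set φ : V →ₗ[Kq] Kq :=
      { toFun := fun w => B w v
        map_add' := fun u w => hadd u w v
        map_smul' := fun a u => hsmul a u v } with hφdef
    have hφv : φ v = B v v := rfl
    have hrange : LinearMap.range φ = ⊤ := by
      rw [Submodule.eq_top_iff']
      intro y
      refine ⟨(y / B v v) • v, ?_⟩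
      rw [map_smul, hφv, smul_eq_mul]
      field_simp
    have hkerrank : Module.finrank Kq (LinearMap.ker φ) = n := by
      have h := LinearMap.finrank_range_add_finrank_ker φ
      rw [hrange, finrank_top, Module.finrank_self, hrank] at h
      omega
    set N := LinearMap.ker φ with hNdef
    -- restricted form
    set B' : N → N → Kq := fun x y => B x y with hB'def
    obtain ⟨b, hborth, hbnorm⟩ := ih N B'
      (fun a b u v w => by simp only [hB'def, Submodule.coe_add, SetLike.val_smul]; exact hlin a b u v w)
      (fun u v => hsymm u v)
      (fun x => hpos x)
      (fun x hx => Subtype.ext (hdef x hx))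
      (fun x hx => heven x hx)
      hkerrank
    -- extend to a basis of V
    have hli : ∀ (d : Kq), ∀ x ∈ N, d • v + x = 0 → d = 0 := by
      intro d x hx hdx
      have h1 : B (d • v + x) v = 0 := by rw [hdx]; exact hB0 v
      rw [hadd, hsmul] at h1
      have hxv : B x v = 0 := hx
      rw [hxv, add_zero] at h1
      exact (mul_eq_zero.mp h1).resolve_right hBvvne
    have hsp : ∀ z : V, ∃ d : Kq, z + d • v ∈ N := by
      intro z
      refine ⟨-(B z v / B v v), ?_⟩
      show B (z + -(B z v / B v v) • v) v = 0
      rw [hadd, hsmul]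
      field_simp
      ring
    set b' : Module.Basis (Fin (n + 1)) Kq V := Module.Basis.mkFinCons v b hli hsp with hb'def
    have hb'coe : ⇑b' = Fin.cons v ((↑) ∘ b) := Module.Basis.coe_mkFinCons v b hli hsp
    have hbk : ∀ i : Fin n, B ((b i : V)) v = 0 := fun i => (b i).2
    have hbk' : ∀ i : Fin n, B v ((b i : V)) = 0 := by
      intro i
      rw [hsymm, hbk, map_zero]
    refine ⟨b', ?_, ?_⟩
    · intro i j
      refine Fin.cases ?_ ?_ i
      · refine Fin.cases ?_ ?_ j
        · intro h; exact absurd rfl h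
        · intro j' _
          simp only [hb'coe, Fin.cons_zero, Fin.cons_succ, Function.comp_apply]
          exact hbk' j'
      · intro i'
        refine Fin.cases ?_ ?_ j
        · intro _
          simp only [hb'coe, Fin.cons_zero, Fin.cons_succ, Function.comp_apply]
          exact hbk i'
        · intro j' hne
          simp only [hb'coe, Fin.cons_succ, Function.comp_apply]
          exact hborth i' j' (fun h => hne (congrArg Fin.succ h))
    · intro i
      refine Fin.cases ?_ ?_ i
      · simp only [hb'coe, Fin.cons_zero]
        exact ⟨hBvv1, hBvvdeg⟩
      · intro i'
        simp only [hb'coe, Fin.cons_succ, Function.comp_apply]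
        exact hbnorm i'

/-- Every finite-dimensional `ℂ(q)`-vector space with a `ℂ(q)`-valued Hermitian inner product
(Definition 2.2 of the paper) has an orthogonal basis consisting of almost normal vectors,
i.e. vectors `v` with `lt(v) = lc((v,v))^{1/2} q^{deg((v,v))/2} = 1`, equivalently
`lc((v,v)) = 1` and `deg((v,v)) = 0`. -/
theorem statement1 (V : Type) [AddCommGroup V] [Module Kq V] [FiniteDimensional Kq V]
    (B : V → V → Kq)
    -- sesquilinearity in the first argument
    (hlin : ∀ (a b : Kq) (u v w : V), B (a • u + b • v) w = a * B u w + b * B v w)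
    -- Hermitian symmetry with respect to the conjugation fixing `q`
    (hsymm : ∀ u v : V, B v u = qconj (B u v))
    -- `lc((v,v)) ≥ 0`
    (hpos : ∀ v : V, (lcoef (B v v)).im = 0 ∧ 0 ≤ (lcoef (B v v)).re)
    -- `lc((v,v)) = 0` only for `v = 0`
    (hdef : ∀ v : V, lcoef (B v v) = 0 → v = 0)
    -- `deg((v,v))` is even (or `−∞`, i.e. `(v,v) = 0`)
    (heven : ∀ v : V, B v v ≠ 0 → Even (B v v).intDegree) :
    ∃ (n : ℕ) (b : Module.Basis (Fin n) Kq V),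
      (∀ i j : Fin n, i ≠ j → B (b i) (b j) = 0) ∧
      (∀ i : Fin n, lcoef (B (b i) (b i)) = 1 ∧ (B (b i) (b i)).intDegree = 0) := by
  refine ⟨Module.finrank Kq V, ?_⟩
  obtain ⟨b, h1, h2⟩ := main_aux (Module.finrank Kq V) V B hlin hsymm hpos hdef heven rfl
  exact ⟨b, h1, h2⟩

end
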